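/- Let μ > 1 and h < 0. Suppose a : ℝ → ℝ is real-analytic and satisfies simultaneously, for all x ∈ ℝ, the two differential equations a''(x) = a(x)/(5(x² − 2h)) and 3(x² − 2h)·a''(x) + 12x·a'(x) + 2(2 + μ)·a(x) = 0. Then a is identically zero. -/

import Mathlib

/-- **An analytic function satisfying two incompatible second-order ODEs must
vanish.**  Let `μ > 1` and `h < 0`.  If `a : ℝ → ℝ` is real-analytic and
satisfies both `a''(x) = a(x)/(5(x² − 2h))` and
`3(x² − 2h)a''(x) + 12x·a'(x) + 2(2+μ)a(x) = 0` for all `x ∈ ℝ`, then `a ≡ 0`. -/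
theorem analytic_solution_of_two_odes_vanishes
    (μ h : ℝ) (hμ : 1 < μ) (hh : h < 0)
    (a : ℝ → ℝ) (ha : ∀ x : ℝ, AnalyticAt ℝ a x)
    (heq1 : ∀ x : ℝ, deriv (deriv a) x = a x / (5 * (x ^ 2 - 2 * h)))
    (heq2 : ∀ x : ℝ, 3 * (x ^ 2 - 2 * h) * deriv (deriv a) x
      + 12 * x * deriv a x + 2 * (2 + μ) * a x = 0) :
    ∀ x : ℝ, a x = 0 := by
  set c : ℝ := 3 / 5 + 2 * (2 + μ) with hc
  have hcpos : 0 < c := by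
    have : 0 < 2 + μ := by linarith
    have : 0 < 2 * (2 + μ) := by linarith
    rw [hc]; linarith
  -- first-order equation
  have key : ∀ x : ℝ, 12 * x * deriv a x + c * a x = 0 := by
    intro x
    have hx : x ^ 2 - 2 * h ≠ 0 := by nlinarith [sq_nonneg x]
    have h2 := heq2 x
    rw [heq1 x] at h2
    have : 3 * (x ^ 2 - 2 * h) * (a x / (5 * (x ^ 2 - 2 * h))) = 3 / 5 * a x := by
      field_simp
    rw [this] at h2
    rw [hc]; linarith
  -- smoothness
  have hsm : ContDiff ℝ ⊤ a := by
    rw [contDiff_iff_contDiffAt]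
    exact fun x => (ha x).contDiffAt
  have hcd : ∀ n : ℕ, Differentiable ℝ (iteratedDeriv n a) := by
    intro n
    exact hsm.differentiable_iteratedDeriv n (by simp)
  -- iterated relation
  have hb : ∀ n : ℕ, ∀ x : ℝ,
      12 * x * iteratedDeriv (n + 1) a x + (12 * n + c) * iteratedDeriv n a x = 0 := by
    intro n
    induction n with
    | zero =>
      intro x
      simpa [iteratedDeriv_one, iteratedDeriv_zero] using key x
    | succ n ih =>
      intro x
      have hD : ∀ m : ℕ, ∀ y : ℝ, HasDerivAt (iteratedDeriv m a)
          (iteratedDeriv (m + 1) a y) y := by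
        intro m y
        have := (hcd m y).hasDerivAt
        rwa [← iteratedDeriv_succ] at this
      have hF : ∀ y : ℝ, HasDerivAt
          (fun x => 12 * x * iteratedDeriv (n + 1) a x + (12 * n + c) * iteratedDeriv n a x)
          (12 * iteratedDeriv (n + 1) a y + 12 * y * iteratedDeriv (n + 2) a y
            + (12 * n + c) * iteratedDeriv (n + 1) a y) y := by
        intro y
        have h1 := ((hasDerivAt_id y).const_mul (12 : ℝ)).mul (hD (n + 1) y)
        have h2 := (hD n y).const_mul ((12 * n + c) : ℝ)
        have := h1.add h2
        refine this.congr_deriv ?_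
        simp only [id_eq]
        ring
      have hzero : (fun x : ℝ => 12 * x * iteratedDeriv (n + 1) a x
          + (12 * n + c) * iteratedDeriv n a x) = fun _ => (0 : ℝ) := funext ih
      have hF0 : ∀ y : ℝ, HasDerivAt (fun _ : ℝ => (0 : ℝ)) (0 : ℝ) y :=
        fun y => hasDerivAt_const y 0
      have hval : 12 * iteratedDeriv (n + 1) a x + 12 * x * iteratedDeriv (n + 2) a x
          + (12 * n + c) * iteratedDeriv (n + 1) a x = 0 := by
        have := hF x
        rw [hzero] at this
        exact this.unique (hF0 x)
      push_cast
      linarith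
  -- all iterated derivatives vanish at 0
  have hder0 : ∀ n : ℕ, iteratedDeriv n a 0 = 0 := by
    intro n
    have := hb n 0
    have hne : (12 * (n : ℝ) + c) ≠ 0 := by positivity
    have : (12 * (n : ℝ) + c) * iteratedDeriv n a 0 = 0 := by linarith
    exact (mul_eq_zero.mp this).resolve_left hne
  -- a vanishes near 0
  obtain ⟨p, hp⟩ := ha 0
  obtain ⟨r, hpr⟩ := hp
  have hp0 : p = 0 := by
    funext n
    have h1 := hpr.factorial_smul (1 : ℝ) n
    have h2 : iteratedFDeriv ℝ n a 0 (fun _ => (1 : ℝ)) = 0 := by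
      rw [← iteratedDeriv_eq_iteratedFDeriv]
      exact hder0 n
    rw [h2] at h1
    have hcoeff : p.coeff n = 0 := by
      have h3 : (n.factorial : ℝ) * p.coeff n = 0 := by
        rw [FormalMultilinearSeries.coeff, ← nsmul_eq_mul]
        exact h1
      have hne : (n.factorial : ℝ) ≠ 0 := Nat.cast_ne_zero.mpr n.factorial_ne_zero
      exact (mul_eq_zero.mp h3).resolve_left hne
    show p n = 0
    exact (FormalMultilinearSeries.coeff_eq_zero (p := p) (n := n)).mp hcoeff
  have hps0 : HasFPowerSeriesAt a (0 : FormalMultilinearSeries ℝ ℝ ℝ) 0 := by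
    rw [← hp0]; exact ⟨r, hpr⟩
  have hev : a =ᶠ[nhds 0] 0 := hps0.eventually_eq_zero
  have hA : AnalyticOnNhd ℝ a Set.univ := fun x _ => ha x
  have := hA.eqOn_zero_of_preconnected_of_eventuallyEq_zero isPreconnected_univ
    (Set.mem_univ 0) hev
  intro x
  exact this (Set.mem_univ x)
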